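/- Let K be a field, λ ∈ K^× an element that is not a root of unity, and g ∈ K⟨⟨e_0,e_1⟩⟩ with g[∅]=1. Let τ(λ) be the grading automorphism multiplying each word of weight n (length n) by λ^n. Then the map ψ: f ↦ g ∘ τ(λ)(f), where ∘ is the Ihara product g ∘ f = g·f(e_0,g^{-1}e_1g), has a unique fixed point in {f : f[∅]=1}. -/

import Mathlib

open Finset

abbrev Word := List (Fin 2)

variable {K : Type*} [Field K]

/-- Multiplication via deconcatenation: `(f·g)[w] = ∑_{w = uv} f[u]·g[v]`. -/
def seriesMul (f g : Word → K) : Word → K :=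
  fun w => ∑ k ∈ Finset.range (w.length + 1), f (w.take k) * g (w.drop k)

/-- The unit series `1`. -/
def seriesOne : Word → K := fun w => if w = [] then 1 else 0

/-- The series `e₁`. -/
def e1Series : Word → K := fun w => if w = [1] then 1 else 0

/-- The multiplicative inverse of a series with constant coefficient `1`. -/
def seriesInv (f : Word → K) : Word → K
  | [] => 1
  | x :: w => -∑ k ∈ Finset.range (w.length + 1), f (x :: w.take k) * seriesInv f (w.drop k)
  termination_by w => w.length
  decreasing_by simp [List.length_drop] <;> omega

/-- Coefficient of the word `w` in the image of the monomial `u` under the continuous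
algebra substitution `e₀ ↦ e₀`, `e₁ ↦ h`. -/
def substCoeff (h : Word → K) : Word → Word → K
  | [], w => if w = [] then 1 else 0
  | a :: u, w =>
    if a = 0 then
      match w with
      | [] => 0
      | b :: w' => if b = 0 then substCoeff h u w' else 0
    else
      ∑ k ∈ Finset.range (w.length + 1), h (w.take k) * substCoeff h u (w.drop k)

/-- The substitution `f(e₀, h)`: substitute `e₀ ↦ e₀`, `e₁ ↦ h` in `f`
(for `h` with zero constant coefficient). -/
def subst (f h : Word → K) : Word → K :=
  fun w => ∑ k ∈ Finset.range (w.length + 1),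
    ∑ u : Fin k → Fin 2, f (List.ofFn u) * substCoeff h (List.ofFn u) w

/-- `Ad_g(e₁) = g⁻¹ e₁ g`. -/
def adE1 (g : Word → K) : Word → K :=
  seriesMul (seriesMul (seriesInv g) e1Series) g

/-- The Ihara (twisted Magnus) product `g ∘ f = g · f(e₀, g⁻¹ e₁ g)`. -/
def ihara (g f : Word → K) : Word → K :=
  seriesMul g (subst f (adE1 g))

/-- The grading automorphism `τ(λ)`, multiplying each word of weight (length) `n` by `λⁿ`. -/
def tauScale (lam : K) (f : Word → K) : Word → K := fun w => lam ^ w.length * f w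

lemma seriesMul_nil (f g : Word → K) : seriesMul f g [] = f [] * g [] := by
  simp [seriesMul]

lemma seriesMul_single (f g : Word → K) (a : Fin 2) :
    seriesMul f g [a] = f [] * g [a] + f [a] * g [] := by
  simp [seriesMul, Finset.sum_range_succ]

lemma adE1_nil (g : Word → K) : adE1 g [] = 0 := by
  simp [adE1, seriesMul_nil, seriesInv, e1Series]

lemma adE1_single (g : Word → K) (hg : g [] = 1) (a : Fin 2) :
    adE1 g [a] = if a = 1 then 1 else 0 := by
  have : ([a] : Word) = [1] ↔ a = 1 := by simp
  have hi : seriesInv g [] = (1 : K) := by rw [seriesInv]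
  simp [adE1, seriesMul_single, seriesMul_nil, seriesInv, e1Series, hg, this, hi]


lemma substCoeff_nil (h : Word → K) (w : Word) :
    substCoeff h [] w = if w = [] then 1 else 0 := rfl

lemma substCoeff_zero_nil (h : Word → K) (u : Word) :
    substCoeff h (0 :: u) [] = 0 := rfl

lemma substCoeff_zero_cons (h : Word → K) (u : Word) (b : Fin 2) (w' : Word) :
    substCoeff h (0 :: u) (b :: w') = if b = 0 then substCoeff h u w' else 0 := rfl

lemma substCoeff_one (h : Word → K) (u w : Word) :
    substCoeff h (1 :: u) w
      = ∑ k ∈ Finset.range (w.length + 1), h (w.take k) * substCoeff h u (w.drop k) := rfl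

lemma fin_two_cases (a : Fin 2) : a = 0 ∨ a = 1 := by revert a; decide

lemma substCoeff_eq_zero {h : Word → K} (h0 : h [] = 0) :
    ∀ u w : Word, w.length < u.length → substCoeff h u w = 0 := by
  intro u
  induction u with
  | nil => intro w hw; simp at hw
  | cons a u ih =>
    intro w hw
    rcases fin_two_cases a with ha | ha <;> subst ha
    · cases w with
      | nil => exact substCoeff_zero_nil h u
      | cons b w' =>
        rw [substCoeff_zero_cons]
        by_cases hb : b = 0
        · rw [if_pos hb, ih w' (by simp at hw ⊢; omega)]
        · rw [if_neg hb]
    · rw [substCoeff_one]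
      apply Finset.sum_eq_zero
      intro k hk
      rcases Nat.eq_zero_or_pos k with hk0 | hk0
      · subst hk0; simp [h0]
      · rw [ih _ (by simp at hw hk ⊢; omega), mul_zero]

lemma substCoeff_eq_delta {h : Word → K} (h0 : h [] = 0)
    (h1 : ∀ a : Fin 2, h [a] = if a = 1 then 1 else 0) :
    ∀ u w : Word, u.length = w.length → substCoeff h u w = if u = w then 1 else 0 := by
  intro u
  induction u with
  | nil =>
    intro w hw
    cases w with
    | nil => simp [substCoeff_nil]
    | cons b w' => simp at hw
  | cons a u ih =>
    intro w hw
    cases w with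
    | nil => simp at hw
    | cons b w' =>
      have hlen : u.length = w'.length := by simpa using hw
      rcases fin_two_cases a with ha | ha <;> subst ha
      · rw [substCoeff_zero_cons]
        by_cases hb : b = 0
        · subst hb
          rw [if_pos rfl, ih _ hlen]
          by_cases huw : u = w' <;> simp [huw]
        · rw [if_neg hb, if_neg (by simp; intro h; exact absurd h.symm hb)]
      · rw [substCoeff_one]
        rw [Finset.sum_eq_single 1]
        · have ht : (b :: w').take 1 = [b] := rfl
          have hd : (b :: w').drop 1 = w' := rfl
          rw [ht, hd, h1 b, ih _ hlen]
          by_cases hb : b = 1 <;> by_cases huw : u = w' <;>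
            simp [hb, huw, eq_comm (a := (1 : Fin 2)) (b := b)]
        · intro k hk hk1
          rcases Nat.eq_zero_or_pos k with hk0 | hk0
          · subst hk0; simp [h0]
          · rw [substCoeff_eq_zero h0 u _ (by simp at hk ⊢; omega), mul_zero]
        · intro hc; simp at hc

lemma subst_congr {h : Word → K} (f f' : Word → K) (w : Word)
    (hff : ∀ v : Word, v.length ≤ w.length → f v = f' v) :
    subst f h w = subst f' h w := by
  unfold subst
  refine Finset.sum_congr rfl fun k hk => Finset.sum_congr rfl fun u _ => ?_
  rw [hff]
  simp at hk ⊢; omega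

lemma subst_top {h : Word → K} (h0 : h [] = 0)
    (h1 : ∀ a : Fin 2, h [a] = if a = 1 then 1 else 0) (f : Word → K) (w : Word) :
    subst f h w = f w + ∑ k ∈ Finset.range w.length,
      ∑ u : Fin k → Fin 2, f (List.ofFn u) * substCoeff h (List.ofFn u) w := by
  unfold subst
  rw [Finset.sum_range_succ, add_comm]
  congr 1
  rw [Fintype.sum_eq_single w.get]
  · rw [substCoeff_eq_delta h0 h1 _ _ (by simp), List.ofFn_get]
    simp
  · intro u hu
    rw [substCoeff_eq_delta h0 h1 _ _ (by simp)]
    have hne : List.ofFn u ≠ w := by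
      intro hc
      apply hu
      have : List.ofFn u = List.ofFn w.get := by rw [hc, List.ofFn_get]
      exact List.ofFn_inj.mp this
    simp [hne]

lemma ihara_key (lam : K) (g : Word → K) (hg : g [] = 1) (f f' : Word → K) (w : Word)
    (hff : ∀ v : Word, v.length < w.length → f v = f' v) :
    ihara g (tauScale lam f) w - lam ^ w.length * f w
      = ihara g (tauScale lam f') w - lam ^ w.length * f' w := by
  have h0 : adE1 g [] = 0 := adE1_nil g
  have h1 := adE1_single g hg
  have tail : ∀ k ∈ Finset.range w.length,
      g (w.take (k+1)) * subst (tauScale lam f) (adE1 g) (w.drop (k+1))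
        = g (w.take (k+1)) * subst (tauScale lam f') (adE1 g) (w.drop (k+1)) := by
    intro k hk
    congr 1
    apply subst_congr
    intro v hv
    simp only [tauScale]
    rw [hff v (by simp at hk hv ⊢; omega)]
  have hR : (∑ k ∈ Finset.range w.length, ∑ u : Fin k → Fin 2,
        (tauScale lam f) (List.ofFn u) * substCoeff (adE1 g) (List.ofFn u) w)
      = ∑ k ∈ Finset.range w.length, ∑ u : Fin k → Fin 2,
        (tauScale lam f') (List.ofFn u) * substCoeff (adE1 g) (List.ofFn u) w := by
    refine Finset.sum_congr rfl fun k hk => Finset.sum_congr rfl fun u _ => ?_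
    simp only [tauScale]
    rw [hff (List.ofFn u) (by simp at hk ⊢; omega)]
  show seriesMul g (subst (tauScale lam f) (adE1 g)) w - _ = seriesMul g (subst (tauScale lam f') (adE1 g)) w - _
  unfold seriesMul
  rw [Finset.sum_range_succ', Finset.sum_range_succ']
  rw [Finset.sum_congr rfl tail]
  simp only [List.take_zero, List.drop_zero, hg, one_mul]
  rw [subst_top h0 h1, subst_top h0 h1, hR]
  simp only [tauScale]
  ring

noncomputable def fixpt (lam : K) (g : Word → K) : Word → K
  | w =>
    if w = [] then 1
    else (ihara g (tauScale lam fun v =>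
        if h : v.length < w.length then fixpt lam g v else 0) w) / (1 - lam ^ w.length)
  termination_by w => w.length
  decreasing_by exact h

lemma subst_nil (f h : Word → K) : subst f h [] = f [] := by
  simp [subst, substCoeff]

lemma ihara_nil (g f : Word → K) : ihara g f [] = g [] * f [] := by
  rw [ihara, seriesMul_nil, subst_nil]

/-- If `λ ∈ K^×` is not a root of unity and `g` has constant coefficient `1`, then the
map `f ↦ g ∘ τ(λ)(f)` (with `∘` the Ihara product) has a unique fixed point among the
series with constant coefficient `1`. -/
theorem ihara_tau_contraction_fixed_point {K : Type*} [Field K]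
    (lam : K) (hlam0 : lam ≠ 0) (hlam : ∀ n : ℕ, 0 < n → lam ^ n ≠ 1)
    (g : Word → K) (hg : g [] = 1) :
    ∃! f : Word → K, f [] = 1 ∧ ihara g (tauScale lam f) = f := by
  have hne : ∀ w : Word, w ≠ [] → (1 : K) - lam ^ w.length ≠ 0 := by
    intro w hw
    have : lam ^ w.length ≠ 1 := hlam _ (List.length_pos_iff.mpr hw)
    intro hc
    exact this (by linear_combination -hc)
  have hF0 : fixpt lam g [] = 1 := by rw [fixpt]; simp
  -- fixpt is a fixed point
  have hFfix : ihara g (tauScale lam (fixpt lam g)) = fixpt lam g := by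
    funext w
    by_cases hw : w = []
    · subst hw
      rw [ihara_nil, hg, one_mul]
      simp [tauScale, hF0]
    · set c := lam ^ w.length with hc
      set f' : Word → K := fun v => if h : v.length < w.length then fixpt lam g v else 0 with hf'
      have hkey := ihara_key lam g hg (fixpt lam g) f' w
        (fun v hv => by simp [hf', hv])
      have hf'w : f' w = 0 := by simp [hf']
      have heq : fixpt lam g w = ihara g (tauScale lam f') w / (1 - c) := by
        rw [fixpt]; simp only [if_neg hw]; rfl
      have hA : fixpt lam g w * (1 - c) = ihara g (tauScale lam f') w :=
        (eq_div_iff (hne w hw)).mp heq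
      rw [hf'w] at hkey
      linear_combination hkey - hA
  refine ⟨fixpt lam g, ⟨hF0, hFfix⟩, ?_⟩
  rintro f ⟨hf0, hffix⟩
  -- uniqueness
  suffices H : ∀ n : ℕ, ∀ w : Word, w.length = n → f w = fixpt lam g w by
    funext w; exact H _ w rfl
  intro n
  induction n using Nat.strong_induction_on with
  | _ n ih =>
    intro w hwn
    by_cases hw : w = []
    · subst hw; rw [hf0, hF0]
    · have hkey := ihara_key lam g hg f (fixpt lam g) w
        (fun v hv => ih v.length (by omega) v rfl)
      rw [hffix, hFfix] at hkey
      have : (1 - lam ^ w.length) * (f w - fixpt lam g w) = 0 := by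
        linear_combination hkey
      rcases mul_eq_zero.mp this with h | h
      · exact absurd h (hne w hw)
      · exact sub_eq_zero.mp h
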